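/- Let E be a permutation group on a finite set Ω such that: (a) for every v ∈ Ω the point stabilizer E_v is normal in E; and (b) for all u, v ∈ Ω, |E_u| = |E_v| and either E_u = E_v or E = E_u E_v. Then the 2-closure of E contains a derangement of prime order. -/

import Mathlib

/-- Theorem E: Let `E` be a (nontrivial) permutation group on a finite set
`Ω` such that (a) every point stabilizer `E_v` is normal in `E`, and (b) for all
`u, v ∈ Ω`, `|E_u| = |E_v|` and either `E_u = E_v` or `E = E_u E_v`. Then the 2-closure
of `E` (the permutations preserving the `E`-orbits on `Ω × Ω`) contains a derangement of
prime order. -/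
theorem stmt_15 {Ω : Type*} [Finite Ω] (E : Subgroup (Equiv.Perm Ω)) (hE : E ≠ ⊥)
    (Ev : Ω → Subgroup (Equiv.Perm Ω))
    (hEv : ∀ v, Ev v = E ⊓ MulAction.stabilizer (Equiv.Perm Ω) v)
    (ha : ∀ v : Ω, ∀ g ∈ E, ∀ h ∈ Ev v, g * h * g⁻¹ ∈ Ev v)
    (hb : ∀ u v : Ω, Nat.card (Ev u) = Nat.card (Ev v) ∧
      (Ev u = Ev v ∨ ∀ x ∈ E, ∃ a ∈ Ev u, ∃ b ∈ Ev v, x = a * b)) :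
    ∃ g : Equiv.Perm Ω,
      (∀ u v : Ω, ∃ e ∈ E, (e u, e v) = (g u, g v)) ∧
      (orderOf g).Prime ∧ ∀ x : Ω, g x ≠ x := by
  classical
  -- membership characterization
  have hmem : ∀ (v : Ω) (y : Equiv.Perm Ω), y ∈ Ev v ↔ y ∈ E ∧ y v = v := by
    intro v y
    rw [hEv v]
    simp [Subgroup.mem_inf, MulAction.mem_stabilizer_iff, Equiv.Perm.smul_def]
  have hle : ∀ v, Ev v ≤ E := fun v => by rw [hEv v]; exact inf_le_left
  -- Ω nonempty
  have hΩ : Nonempty Ω := by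
    by_contra h
    rw [not_nonempty_iff] at h
    exact hE ((Subgroup.eq_bot_iff_forall E).2 fun x _ =>
      Equiv.ext fun a => (h.false a).elim)
  -- stabilizers are constant on E-orbits
  have hA : ∀ y ∈ E, ∀ u : Ω, Ev (y u) = Ev u := by
    intro y hy u
    ext z
    rw [hmem, hmem]
    constructor
    · rintro ⟨hzE, hz⟩
      have h1 : y⁻¹ * z * y ∈ Ev u := by
        rw [hmem]
        refine ⟨mul_mem (mul_mem (inv_mem hy) hzE) hy, ?_⟩
        simp [Equiv.Perm.mul_apply, hz]
      have h2 := ha u y hy _ h1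
      have : y * (y⁻¹ * z * y) * y⁻¹ = z := by group
      rw [this] at h2
      exact (hmem u z).1 h2
    · rintro ⟨hzE, hz⟩
      have h1 : y⁻¹ * z * y⁻¹⁻¹ ∈ Ev u := ha u y⁻¹ (inv_mem hy) z ((hmem u z).2 ⟨hzE, hz⟩)
      rw [inv_inv] at h1
      have h2 := ((hmem u _).1 h1).2
      refine ⟨hzE, ?_⟩
      have : z (y u) = y ((y⁻¹ * z * y) u) := by simp [Equiv.Perm.mul_apply]
      rw [this, h2]
  -- some stabilizer is proper
  have hv0 : ∃ v0 : Ω, Ev v0 ≠ E := by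
    by_contra h
    push_neg at h
    apply hE
    rw [Subgroup.eq_bot_iff_forall]
    intro x hx
    ext a
    have := ((hmem a x).1 (by rw [h a]; exact hx)).2
    simpa using this
  obtain ⟨v0, hv0⟩ := hv0
  -- all relative indices are equal to m
  set H : Ω → Subgroup E := fun v => (Ev v).subgroupOf E with hH
  have cardH : ∀ v, Nat.card (H v) = Nat.card (Ev v) := fun v =>
    Nat.card_congr (Subgroup.subgroupOfEquivOfLe (hle v)).toEquiv
  set m : ℕ := (H v0).index with hm0
  have cardE_pos : 0 < Nat.card (H v0) := Nat.card_pos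
  have hm : ∀ v, (H v).index = m := by
    intro v
    have l1 : Nat.card (H v) * (H v).index = Nat.card E := Subgroup.card_mul_index (H v)
    have l2 : Nat.card (H v0) * (H v0).index = Nat.card E := Subgroup.card_mul_index (H v0)
    have l3 : Nat.card (H v) = Nat.card (H v0) := by
      rw [cardH, cardH]; exact (hb v v0).1
    rw [l3] at l1
    exact Nat.eq_of_mul_eq_mul_left cardE_pos (l1.trans l2.symm)
  have m1 : m ≠ 1 := by
    intro h
    have : H v0 = ⊤ := Subgroup.index_eq_one.1 (hm0 ▸ h)
    have : E ≤ Ev v0 := (Subgroup.subgroupOf_eq_top).1 this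
    exact hv0 (le_antisymm (hle v0) this)
  set p : ℕ := m.minFac with hp
  have pp : p.Prime := Nat.minFac_prime m1
  haveI : Fact p.Prime := ⟨pp⟩
  -- for each point, an element of E of order p mod its stabilizer
  have hex : ∀ v : Ω, ∃ y : Equiv.Perm Ω, y ∈ E ∧ y ^ p ∈ Ev v ∧ y ∉ Ev v := by
    intro v
    haveI : (H v).Normal := by
      constructor
      intro n hn g
      rw [Subgroup.mem_subgroupOf] at hn ⊢
      exact ha v g g.2 n hn
    have hdvd : p ∣ Nat.card (E ⧸ H v) := by
      have : Nat.card (E ⧸ H v) = (H v).index := rfl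
      rw [this, hm v]
      exact Nat.minFac_dvd m
    obtain ⟨q, hq⟩ := exists_prime_orderOf_dvd_card' (G := E ⧸ H v) p hdvd
    obtain ⟨x, rfl⟩ := QuotientGroup.mk_surjective q
    refine ⟨(x : Equiv.Perm Ω), x.2, ?_, ?_⟩
    · have h1 : (QuotientGroup.mk x : E ⧸ H v) ^ p = 1 := by
        rw [← hq]; exact pow_orderOf_eq_one _
      have h2 : (QuotientGroup.mk (x ^ p) : E ⧸ H v) = 1 := by
        rw [← h1]; rfl
      have h3 : x ^ p ∈ H v := (QuotientGroup.eq_one_iff _).1 h2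
      rw [Subgroup.mem_subgroupOf] at h3
      simpa using h3
    · intro hx
      have : (QuotientGroup.mk x : E ⧸ H v) = 1 :=
        (QuotientGroup.eq_one_iff _).2 ((Subgroup.mem_subgroupOf).2 hx)
      rw [this, orderOf_one] at hq
      exact pp.ne_one hq.symm
  -- choice of representative, keyed by the stabilizer subgroup
  set F : Subgroup (Equiv.Perm Ω) → Equiv.Perm Ω := fun N =>
    if h : ∃ y : Equiv.Perm Ω, y ∈ E ∧ y ^ p ∈ N ∧ y ∉ N then h.choose else 1 with hF0
  have hF : ∀ v : Ω, F (Ev v) ∈ E ∧ (F (Ev v)) ^ p ∈ Ev v ∧ F (Ev v) ∉ Ev v := by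
    intro v
    have h := hex v
    simp only [hF0, dif_pos h]
    exact h.choose_spec
  set xu : Ω → Equiv.Perm Ω := fun u => F (Ev u) with hxu
  -- the glued map is injective, hence a permutation
  have inj : Function.Injective (fun u : Ω => xu u u) := by
    intro u v h
    simp only at h
    have h1 : Ev u = Ev v := by
      have e1 : Ev (xu u u) = Ev u := hA _ (hF u).1 u
      have e2 : Ev (xu v v) = Ev v := hA _ (hF v).1 v
      rw [← e1, ← e2, h]
    have h2 : xu u = xu v := by simp only [hxu, h1]
    rw [h2] at h
    exact (xu v).injective h
  let g : Equiv.Perm Ω := Equiv.ofBijective _ (Finite.injective_iff_bijective.mp inj)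
  have hg : ∀ u, g u = xu u u := fun u => rfl
  have hclass : ∀ u, xu (g u) = xu u := by
    intro u
    have : Ev (g u) = Ev u := by rw [hg u]; exact hA _ (hF u).1 u
    simp only [hxu, this]
  have hpow : ∀ (n : ℕ) (u : Ω), (g ^ n) u = ((xu u) ^ n) u := by
    intro n
    induction n with
    | zero => intro u; simp
    | succ n ih =>
      intro u
      have e1 : (g ^ (n + 1)) u = (g ^ n) (g u) := by
        rw [pow_succ, Equiv.Perm.mul_apply]
      rw [e1, ih (g u), hclass u, hg u, pow_succ, Equiv.Perm.mul_apply]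
  have hfix : ∀ u : Ω, g u ≠ u := by
    intro u h
    rw [hg u] at h
    exact (hF u).2.2 ((hmem u _).2 ⟨(hF u).1, h⟩)
  have hgp : g ^ p = 1 := by
    ext u
    rw [hpow p u, ((hmem u _).1 (hF u).2.1).2]
    rfl
  have hne : g ≠ 1 := fun h => hfix (Classical.arbitrary Ω) (by rw [h]; rfl)
  refine ⟨g, ?_, ?_, hfix⟩
  · intro u v
    by_cases hEq : Ev u = Ev v
    · refine ⟨xu u, (hF u).1, ?_⟩
      have : xu u = xu v := by simp only [hxu, hEq]
      rw [hg u, hg v, ← this]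
    · obtain ⟨-, hor⟩ := hb u v
      rcases hor with h | hprod
      · exact absurd h hEq
      · have hz : (xu u)⁻¹ * xu v ∈ E := mul_mem (inv_mem (hF u).1) (hF v).1
        obtain ⟨a, haa, b, hbb, hab⟩ := hprod _ hz
        refine ⟨xu u * a, mul_mem (hF u).1 (hle u haa), ?_⟩
        have e2 : xu u * a = xu v * b⁻¹ := by
          have : xu v = xu u * (a * b) := by rw [← hab]; group
          rw [this]; group
        have eu : (xu u * a) u = g u := by
          rw [Equiv.Perm.mul_apply, ((hmem u a).1 haa).2, hg u]
        have ev : (xu u * a) v = g v := by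
          rw [e2, Equiv.Perm.mul_apply, hg v]
          congr 1
          have hbv : b v = v := ((hmem v b).1 hbb).2
          conv_lhs => rw [← hbv]
          exact Equiv.symm_apply_apply b v
        rw [eu, ev]
  · rw [orderOf_eq_prime hgp hne]
    exact pp
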